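/- Let A_0,…,A_{m−1} be n-qubit operators with unitaries U_j that are (α_j, a, ε_BE)-block-encodings of A_j (α_j > 0), let A = ∑_j y_j A_j for y ∈ ℂ^m, and let (P_L, P_R) be a (β, b, ε_SP)-state-preparation-pair for the vector (α_0 y_0,…,α_{m−1} y_{m−1}). Then W̃ = (P_L† ⊗ I_a ⊗ I_n) W (P_R ⊗ I_a ⊗ I_n), with W = ∑_{j<m} |j⟩⟨j| ⊗ U_j + ∑_{j=m}^{2^b−1} |j⟩⟨j| ⊗ I_{a+n}, is a (β, a+b, (β/min_j α_j)·ε_BE + ε_SP)-block-encoding of A. -/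

import Mathlib

/-- The block of `W` picked out by an ancilla basis state `z`. -/
def blockOf {A N : Type*} [Fintype A] [Fintype N]
    (W : Matrix (A × N) (A × N) ℂ) (z : A) : Matrix N N ℂ :=
  Matrix.of fun i j => W (z, i) (z, j)

/-- Spectral (ℓ²-operator) norm of a square complex matrix. -/
noncomputable def l2OpNorm {N : Type*} [Fintype N] [DecidableEq N]
    (M : Matrix N N ℂ) : ℝ :=
  ‖(Matrix.toEuclideanCLM (𝕜 := ℂ) M : EuclideanSpace ℂ N →L[ℂ] EuclideanSpace ℂ N)‖

/-- The select unitary `W = ∑_{j<m} |j⟩⟨j| ⊗ U_j + ∑_{m≤j<2^b} |j⟩⟨j| ⊗ I`. -/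
def selectW {A N : Type*} [Fintype A] [DecidableEq A] [Fintype N] [DecidableEq N]
    (m b : ℕ) (U : Fin m → Matrix (A × N) (A × N) ℂ) :
    Matrix ((Fin (2 ^ b) × A) × N) ((Fin (2 ^ b) × A) × N) ℂ :=
  Matrix.of fun p q =>
    if p.1.1 = q.1.1 then
      (if h : (p.1.1 : ℕ) < m then U ⟨p.1.1, h⟩ (p.1.2, p.2) (q.1.2, q.2)
       else if p.1.2 = q.1.2 ∧ p.2 = q.2 then 1 else 0)
    else 0

/-- `P ⊗ I_a ⊗ I_n` for a matrix `P` acting on the `b`-qubit register. -/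
def kronIdRight {B A N : Type*} [Fintype B] [Fintype A] [DecidableEq A]
    [Fintype N] [DecidableEq N] (P : Matrix B B ℂ) :
    Matrix ((B × A) × N) ((B × A) × N) ℂ :=
  Matrix.of fun p q =>
    P p.1.1 q.1.1 * (if p.1.2 = q.1.2 ∧ p.2 = q.2 then 1 else 0)


open scoped Matrix.Norms.L2Operator

section Aux

lemma l2OpNorm_eq_norm {N : Type*} [Fintype N] [DecidableEq N] (M : Matrix N N ℂ) :
    l2OpNorm M = ‖M‖ := rfl

lemma l2_norm_one_le {N : Type*} [Fintype N] [DecidableEq N] :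
    ‖(1 : Matrix N N ℂ)‖ ≤ 1 := by
  rw [Matrix.cstar_norm_def, map_one]; exact ContinuousLinearMap.norm_id_le

lemma l2_norm_unitary_le {N : Type*} [Fintype N] [DecidableEq N] (U : Matrix N N ℂ)
    (hU : U ∈ Matrix.unitaryGroup N ℂ) : ‖U‖ ≤ 1 := by
  have h1 : ‖U.conjTranspose * U‖ = ‖U‖ * ‖U‖ := Matrix.l2_opNorm_conjTranspose_mul_self U
  have h2 : U.conjTranspose * U = 1 := Matrix.UnitaryGroup.star_mul_self ⟨U, hU⟩
  have h3 : ‖(1 : Matrix N N ℂ)‖ ≤ 1 := l2_norm_one_le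
  rw [h2] at h1
  nlinarith [norm_nonneg U]

variable {A N : Type*} [Fintype A] [DecidableEq A] [Fintype N] [DecidableEq N]

/-- The isometry `N → A × N`, `i ↦ (z,i)`, as a matrix. -/
def pickP (z : A) : Matrix N (A × N) ℂ :=
  Matrix.of fun i p => if p = (z, i) then 1 else 0

lemma blockOf_eq_mul (W : Matrix (A × N) (A × N) ℂ) (z : A) :
    blockOf W z = pickP (N := N) z * W * (pickP (N := N) z).conjTranspose := by
  ext i j
  simp only [blockOf, pickP, Matrix.mul_apply, Matrix.conjTranspose_apply, Matrix.of_apply,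
    ite_mul, one_mul, zero_mul, Finset.sum_ite_eq, Finset.mem_univ, if_true]
  simp [mul_ite, apply_ite (starRingEnd ℂ)]

lemma pickP_mul_self (z : A) :
    pickP (N := N) z * (pickP (N := N) z).conjTranspose = (1 : Matrix N N ℂ) := by
  ext i j
  simp only [pickP, Matrix.mul_apply, Matrix.conjTranspose_apply, Matrix.of_apply,
    ite_mul, one_mul, zero_mul]
  rw [Finset.sum_ite_eq' Finset.univ ((z, i) : A × N)]
  simp [Matrix.one_apply, Prod.ext_iff, eq_comm]

lemma l2OpNorm_blockOf_le (U : Matrix (A × N) (A × N) ℂ)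
    (hU : U ∈ Matrix.unitaryGroup (A × N) ℂ) (z : A) : ‖blockOf U z‖ ≤ 1 := by
  have hP : ‖pickP (N := N) z‖ ≤ 1 := by
    have h1 : ‖((pickP (N := N) z).conjTranspose).conjTranspose * (pickP (N := N) z).conjTranspose‖
        = ‖(pickP (N := N) z).conjTranspose‖ * ‖(pickP (N := N) z).conjTranspose‖ :=
      Matrix.l2_opNorm_conjTranspose_mul_self _
    rw [Matrix.conjTranspose_conjTranspose, pickP_mul_self,
      Matrix.l2_opNorm_conjTranspose] at h1
    have h3 : ‖(1 : Matrix N N ℂ)‖ ≤ 1 := l2_norm_one_le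
    nlinarith [norm_nonneg (pickP (N := N) z)]
  have hUn : ‖U‖ ≤ 1 := l2_norm_unitary_le U hU
  rw [blockOf_eq_mul]
  calc ‖pickP (N := N) z * U * (pickP (N := N) z).conjTranspose‖
      ≤ ‖pickP (N := N) z * U‖ * ‖(pickP (N := N) z).conjTranspose‖ := Matrix.l2_opNorm_mul _ _
    _ ≤ ‖pickP (N := N) z‖ * ‖U‖ * ‖(pickP (N := N) z).conjTranspose‖ :=
        mul_le_mul_of_nonneg_right (Matrix.l2_opNorm_mul _ _) (norm_nonneg _)
    _ ≤ 1 := by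
        rw [Matrix.l2_opNorm_conjTranspose]
        exact mul_le_one₀ (mul_le_one₀ hP (norm_nonneg U) hUn) (norm_nonneg _) hP

lemma kron_mul_apply {B : Type*} [Fintype B] (P : Matrix B B ℂ)
    (M : Matrix ((B × A) × N) ((B × A) × N) ℂ) (p q : (B × A) × N) :
    (kronIdRight P * M : Matrix ((B × A) × N) ((B × A) × N) ℂ) p q =
      ∑ k : B, P p.1.1 k * M ((k, p.1.2), p.2) q := by
  rw [Matrix.mul_apply, Fintype.sum_prod_type]
  simp only [Fintype.sum_prod_type, kronIdRight, Matrix.of_apply, ite_and, mul_ite, mul_one,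
    mul_zero, ite_mul, zero_mul]
  simp [Finset.sum_ite_eq', Finset.sum_ite_eq]

lemma mul_kron_apply {B : Type*} [Fintype B] (Q : Matrix B B ℂ)
    (M : Matrix ((B × A) × N) ((B × A) × N) ℂ) (p q : (B × A) × N) :
    (M * kronIdRight Q : Matrix ((B × A) × N) ((B × A) × N) ℂ) p q =
      ∑ k : B, M p ((k, q.1.2), q.2) * Q k q.1.1 := by
  rw [Matrix.mul_apply, Fintype.sum_prod_type]
  simp only [Fintype.sum_prod_type, kronIdRight, Matrix.of_apply, ite_and, mul_ite, mul_one,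
    mul_zero, ite_mul, zero_mul]
  simp [Finset.sum_ite_eq', Finset.sum_ite_eq]

lemma sum_castLE {M : Type*} [AddCommMonoid M] {m n : ℕ} (h : m ≤ n) (g : Fin n → M)
    (hg : ∀ k : Fin n, m ≤ (k : ℕ) → g k = 0) :
    ∑ k, g k = ∑ j : Fin m, g (Fin.castLE h j) := by
  have h0 : ∑ j : Fin m, g (Fin.castLE h j) = ∑ k ∈ Finset.univ.map (Fin.castLEEmb h), g k :=
    (Finset.sum_map Finset.univ (Fin.castLEEmb h) g).symm
  rw [h0]
  refine (Finset.sum_subset (Finset.subset_univ _) fun x _ hx => hg x ?_).symm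
  by_contra hlt
  exact hx (Finset.mem_map.mpr ⟨⟨(x : ℕ), not_le.mp hlt⟩, Finset.mem_univ _, Fin.ext rfl⟩)

lemma blockOf_tilde (z : A) (m b : ℕ) (hmb : m ≤ 2 ^ b)
    (U : Fin m → Matrix (A × N) (A × N) ℂ) (PL PR : Matrix (Fin (2 ^ b)) (Fin (2 ^ b)) ℂ)
    (hSP0 : ∀ j : Fin (2 ^ b), m ≤ (j : ℕ) → (starRingEnd ℂ) (PL j 0) * PR j 0 = 0) :
    blockOf (kronIdRight PL.conjTranspose * selectW m b U * kronIdRight PR)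
        ((0 : Fin (2 ^ b)), z) =
      ∑ j : Fin m, ((starRingEnd ℂ) (PL (Fin.castLE hmb j) 0) * PR (Fin.castLE hmb j) 0) •
        blockOf (U j) z := by
  ext i j
  have key : ∀ i' j' : N,
      (kronIdRight PL.conjTranspose * selectW m b U * kronIdRight PR :
        Matrix ((Fin (2 ^ b) × A) × N) ((Fin (2 ^ b) × A) × N) ℂ)
        (((0 : Fin (2 ^ b)), z), i') (((0 : Fin (2 ^ b)), z), j') =
      ∑ k : Fin (2 ^ b), (starRingEnd ℂ) (PL k 0) *
        (if h : (k : ℕ) < m then U ⟨k, h⟩ (z, i') (z, j')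
         else if i' = j' then 1 else 0) * PR k 0 := by
    intro i' j'
    rw [mul_assoc, kron_mul_apply]
    refine Finset.sum_congr rfl fun k _ => ?_
    rw [mul_kron_apply]
    simp only [selectW, Matrix.of_apply, Matrix.conjTranspose_apply]
    rw [Finset.sum_eq_single k]
    · simp [mul_assoc]
    · intro l _ hl
      simp [Ne.symm hl]
    · simp
  simp only [blockOf, Matrix.of_apply, key, Matrix.sum_apply, Matrix.smul_apply, smul_eq_mul]
  rw [sum_castLE hmb _ (fun k hk => by
    rw [dif_neg (not_lt.mpr hk)]
    rcases eq_or_ne i j with rfl | hij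
    · simp [hSP0 k hk]
    · simp [hij])]
  refine Finset.sum_congr rfl fun k _ => ?_
  rw [dif_pos (by simp [k.isLt])]
  simp [blockOf]
  ring

end Aux

/-- Generalized linear combination of block-encoded matrices: given `(α_j,a,ε_BE)`-block-
encodings `U_j` of `A_j` and a `(β,b,ε_SP)`-state-preparation-pair `(P_L,P_R)` for `α ⊙ y`,
the matrix `W̃ = (P_L† ⊗ I)(∑_j |j⟩⟨j| ⊗ U_j + ∑_{j≥m} |j⟩⟨j| ⊗ I)(P_R ⊗ I)` is a
`(β, a+b, (β/min_j α_j) ε_BE + ε_SP)`-block-encoding of `A = ∑_j y_j A_j`. -/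
theorem blockEncoding_linear_combination
    {A N : Type*} [Fintype A] [DecidableEq A] [Fintype N] [DecidableEq N]
    (z : A) (m b : ℕ) (hm : 0 < m) (hmb : m ≤ 2 ^ b)
    (Amat : Fin m → Matrix N N ℂ) (U : Fin m → Matrix (A × N) (A × N) ℂ)
    (hU : ∀ j, U j ∈ Matrix.unitaryGroup (A × N) ℂ)
    (α : Fin m → ℝ) (hα : ∀ j, 0 < α j) (εBE : ℝ)
    (hBE : ∀ j, l2OpNorm (Amat j - α j • blockOf (U j) z) ≤ εBE)
    (y : Fin m → ℂ) (β εSP : ℝ)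
    (PL PR : Matrix (Fin (2 ^ b)) (Fin (2 ^ b)) ℂ)
    (hPL : PL ∈ Matrix.unitaryGroup (Fin (2 ^ b)) ℂ)
    (hPR : PR ∈ Matrix.unitaryGroup (Fin (2 ^ b)) ℂ)
    (hnorm1 : ∑ j : Fin m, ‖((α j : ℂ) * y j)‖ ≤ β)
    (hSP : ∑ j : Fin m, ‖((α j : ℂ) * y j -
      (β : ℂ) * (starRingEnd ℂ) (PL (Fin.castLE hmb j) 0) * PR (Fin.castLE hmb j) 0)‖ ≤ εSP)
    (hSP0 : ∀ j : Fin (2 ^ b), m ≤ (j : ℕ) →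
      (starRingEnd ℂ) (PL j 0) * PR j 0 = 0) :
    l2OpNorm ((∑ j, y j • Amat j) -
        β • blockOf (kronIdRight PL.conjTranspose * selectW m b U * kronIdRight PR)
          ((0 : Fin (2 ^ b)), z)) ≤ (β / ⨅ j, α j) * εBE + εSP := by
  classical
  have hblock := blockOf_tilde z m b hmb U PL PR hSP0
  set c : Fin m → ℂ :=
    fun j => (starRingEnd ℂ) (PL (Fin.castLE hmb j) 0) * PR (Fin.castLE hmb j) 0 with hc
  set Bm : Fin m → Matrix N N ℂ := fun j => blockOf (U j) z with hBm
  rw [l2OpNorm_eq_norm, hblock]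
  have hdecomp : (∑ j, y j • Amat j) - β • ∑ j : Fin m, c j • Bm j
      = ∑ j : Fin m, (y j • (Amat j - α j • Bm j)
          + (((α j : ℂ) * y j) - (β : ℂ) * c j) • Bm j) := by
    ext i k
    simp only [Matrix.sub_apply, Matrix.sum_apply, Matrix.smul_apply, Matrix.add_apply,
      smul_eq_mul, Complex.real_smul, Finset.mul_sum]
    rw [← Finset.sum_sub_distrib]
    refine Finset.sum_congr rfl fun j _ => ?_
    ring
  rw [hdecomp]
  -- the infimum of the α's
  haveI : Nonempty (Fin m) := ⟨⟨0, hm⟩⟩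
  obtain ⟨j0, -, hj0⟩ := Finset.exists_min_image Finset.univ α ⟨⟨0, hm⟩, Finset.mem_univ _⟩
  have hinf : (⨅ j, α j) = α j0 :=
    le_antisymm (ciInf_le (Finite.bddBelow_range α) j0)
      (le_ciInf fun j => hj0 j (Finset.mem_univ j))
  have hεBE : 0 ≤ εBE := le_trans (norm_nonneg _) (hBE ⟨0, hm⟩)
  have hsum_y : (∑ j : Fin m, ‖y j‖) * α j0 ≤ β := by
    calc (∑ j : Fin m, ‖y j‖) * α j0 = ∑ j : Fin m, ‖y j‖ * α j0 := Finset.sum_mul _ _ _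
      _ ≤ ∑ j : Fin m, ‖((α j : ℂ) * y j)‖ := by
          refine Finset.sum_le_sum fun j _ => ?_
          rw [norm_mul, Complex.norm_real, Real.norm_eq_abs, abs_of_pos (hα j)]
          rw [mul_comm]
          exact mul_le_mul_of_nonneg_right (hj0 j (Finset.mem_univ j)) (norm_nonneg _)
      _ ≤ β := hnorm1
  calc ‖∑ j : Fin m, (y j • (Amat j - α j • Bm j)
          + (((α j : ℂ) * y j) - (β : ℂ) * c j) • Bm j)‖
      ≤ ∑ j : Fin m, ‖y j • (Amat j - α j • Bm j)
          + (((α j : ℂ) * y j) - (β : ℂ) * c j) • Bm j‖ := norm_sum_le _ _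
    _ ≤ ∑ j : Fin m, (‖y j‖ * εBE + ‖(α j : ℂ) * y j - (β : ℂ) * c j‖) := by
        refine Finset.sum_le_sum fun j _ => ?_
        refine (norm_add_le _ _).trans (add_le_add ?_ ?_)
        · rw [norm_smul]
          exact mul_le_mul_of_nonneg_left (hBE j) (norm_nonneg _)
        · rw [norm_smul]
          exact mul_le_of_le_one_right (norm_nonneg _) (l2OpNorm_blockOf_le (U j) (hU j) z)
    _ = (∑ j : Fin m, ‖y j‖) * εBE
          + ∑ j : Fin m, ‖(α j : ℂ) * y j - (β : ℂ) * c j‖ := by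
        rw [Finset.sum_add_distrib, Finset.sum_mul]
    _ ≤ (β / ⨅ j, α j) * εBE + εSP := by
        refine add_le_add (mul_le_mul_of_nonneg_right ?_ hεBE) ?_
        · rw [hinf, le_div_iff₀ (hα j0)]
          exact hsum_y
        · refine le_trans (le_of_eq ?_) hSP
          refine Finset.sum_congr rfl fun j _ => ?_
          rw [hc]
          ring_nf
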